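/- arXiv:1909.03282 — 4 statements merged into one kernel-verified Lean document; each statement's English description precedes it below -/
import Mathlib

section
/- The piecewise function f : ℝ → ℝ defined by f(x) = 0 for x ≤ 0, f(x) = 1 − √(1 − x²) for 0 ≤ x < √2/2, f(x) = √(1 − (x − √2)²) − √2 + 1 for √2/2 ≤ x < 1, and f(x) = ½(x − 1 + √((√2 − 1)/2))² + √(2√2 − 2) + (5 − 5√2)/4 for x ≥ 1, is not convex on ℝ. -/
/-- The piecewise function from Example 2 of Zhang–Yin (which satisfies the restricted
secant inequality) is not convex on ℝ. -/
theorem stmt1 :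
    ¬ ConvexOn ℝ Set.univ (fun x : ℝ =>
      if x ≤ 0 then 0
      else if x < Real.sqrt 2 / 2 then 1 - Real.sqrt (1 - x ^ 2)
      else if x < 1 then Real.sqrt (1 - (x - Real.sqrt 2) ^ 2) - Real.sqrt 2 + 1
      else (1 / 2) * (x - 1 + Real.sqrt ((Real.sqrt 2 - 1) / 2)) ^ 2
            + Real.sqrt (2 * Real.sqrt 2 - 2) + (5 - 5 * Real.sqrt 2) / 4) := by
  intro h
  have hs0 : (0:ℝ) ≤ Real.sqrt 2 := Real.sqrt_nonneg 2
  have hs : Real.sqrt 2 ^ 2 = 2 := Real.sq_sqrt (by norm_num)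
  have hs1 : (1.4:ℝ) < Real.sqrt 2 := by nlinarith
  have hs2 : Real.sqrt 2 < 1.5 := by nlinarith
  have heval : ∀ x : ℝ, (0.75:ℝ) ≤ x → x < 1 →
      (if x ≤ 0 then (0:ℝ)
      else if x < Real.sqrt 2 / 2 then 1 - Real.sqrt (1 - x ^ 2)
      else if x < 1 then Real.sqrt (1 - (x - Real.sqrt 2) ^ 2) - Real.sqrt 2 + 1
      else (1 / 2) * (x - 1 + Real.sqrt ((Real.sqrt 2 - 1) / 2)) ^ 2
            + Real.sqrt (2 * Real.sqrt 2 - 2) + (5 - 5 * Real.sqrt 2) / 4)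
      = Real.sqrt (1 - (x - Real.sqrt 2) ^ 2) - Real.sqrt 2 + 1 := by
    intro x hx1 hx2
    rw [if_neg (by linarith), if_neg (by push_neg; linarith), if_pos hx2]
  have key := h.2 (Set.mem_univ (0.75:ℝ)) (Set.mem_univ (0.95:ℝ))
    (by norm_num : (0:ℝ) ≤ 1/2) (by norm_num : (0:ℝ) ≤ 1/2) (by norm_num : (1:ℝ)/2 + 1/2 = 1)
  simp only [smul_eq_mul] at key
  have hmid : (1:ℝ)/2 * 0.75 + 1/2 * 0.95 = 0.85 := by norm_num
  rw [hmid] at key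
  rw [heval 0.75 (by norm_num) (by norm_num), heval 0.95 (by norm_num) (by norm_num),
      heval 0.85 (by norm_num) (by norm_num)] at key
  set a := Real.sqrt (1 - (0.85 - Real.sqrt 2) ^ 2) with ha
  set b := Real.sqrt (1 - (0.75 - Real.sqrt 2) ^ 2) with hb
  set c := Real.sqrt (1 - (0.95 - Real.sqrt 2) ^ 2) with hc
  have ha2 : a ^ 2 = 1 - (0.85 - Real.sqrt 2) ^ 2 := Real.sq_sqrt (by nlinarith)
  have hb2 : b ^ 2 = 1 - (0.75 - Real.sqrt 2) ^ 2 := Real.sq_sqrt (by nlinarith)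
  have hc2 : c ^ 2 = 1 - (0.95 - Real.sqrt 2) ^ 2 := Real.sq_sqrt (by nlinarith)
  have han : 0 ≤ a := Real.sqrt_nonneg _
  have hbn : 0 ≤ b := Real.sqrt_nonneg _
  have hcn : 0 ≤ c := Real.sqrt_nonneg _
  nlinarith [sq_nonneg (b - c), sq_nonneg (b + c - 2*a)]
end

section
/- Suppose each f_i : ℝ^p → ℝ (i = 1,…,n) is differentiable with L_f-Lipschitz gradient, the global cost f = Σᵢ fᵢ satisfies the restricted secant inequality with constant ν > 0 with respect to its nonempty closed convex minimizer set X*, and L is the Laplacian of a connected graph. Define 𝒇̃(𝒙) = Σᵢ fᵢ(xᵢ) on ℝ^{np}, 𝑳 = L ⊗ I_p, and 𝑿* = {𝟏ₙ ⊗ x* : x* ∈ X*}. If α > (2nL_f² + νL_f)/(ν ρ₂(L)), then for all 𝒙 ∈ ℝ^{np}: (∇𝒇̃(𝒙) − ∇𝒇̃(P_{𝑿*}(𝒙)))ᵀ(𝒙 − P_{𝑿*}(𝒙)) + α 𝒙ᵀ𝑳𝒙 ≥ ν₁ ‖𝒙 − P_{𝑿*}(𝒙)‖², where ν₁ = min{ν/(2n),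 α ρ₂(L) − (2nL_f² + νL_f)/ν} > 0. -/
open scoped RealInnerProductSpace

lemma lap_quad' {n : ℕ} (L : Matrix (Fin n) (Fin n) ℝ) (hL : L.IsHermitian)
    (hker : ∀ v : Fin n → ℝ, L.mulVec v = 0 ↔ ∃ c : ℝ, v = (fun _ => c))
    (rho2 : ℝ)
    (hrho2min : ∀ i, hL.eigenvalues i = 0 ∨ rho2 ≤ hL.eigenvalues i)
    (v : EuclideanSpace ℝ (Fin n)) (hv : ∑ i, v i = 0) :
    rho2 * (∑ i, v i ^ 2) ≤ ∑ i, ∑ j, L i j * (v i * v j) := by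
  classical
  have hnorm : ∑ i, v i ^ 2 = ‖v‖ ^ 2 := by
    rw [PiLp.norm_sq_eq_of_L2]
    exact Finset.sum_congr rfl fun i _ => by rw [Real.norm_eq_abs, sq_abs]
  rw [hnorm]
  set u := hL.eigenvectorBasis with hu
  set mv : EuclideanSpace ℝ (Fin n) → EuclideanSpace ℝ (Fin n) := fun w => WithLp.toLp 2 (L.mulVec w) with hmv
  have hsym : ∀ a b : EuclideanSpace ℝ (Fin n), ⟪a, mv b⟫ = ⟪mv a, b⟫ := by
    intro a b
    simp only [PiLp.inner_apply, RCLike.inner_apply', conj_trivial]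
    have h1 : ∑ i, a i * mv b i = dotProduct (a : Fin n → ℝ) (L.mulVec b) := rfl
    have h2 : ∑ i, mv a i * b i
        = dotProduct (L.mulVec (a : Fin n → ℝ)) (b : Fin n → ℝ) := rfl
    rw [h1, h2, Matrix.dotProduct_mulVec, ← Matrix.mulVec_transpose]
    have hLt : L.transpose = L := by
      have := hL.eq
      rwa [Matrix.conjTranspose_eq_transpose_of_trivial] at this
    rw [hLt]
  have key : ∀ w : EuclideanSpace ℝ (Fin n),
      ⟪w, mv w⟫ = ∑ i, hL.eigenvalues i * (⟪u i, w⟫ * ⟪u i, w⟫) := by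
    intro w
    rw [← OrthonormalBasis.sum_inner_mul_inner u w (mv w)]
    congr 1; ext i
    rw [show ⟪u i, mv w⟫ = ⟪mv (u i), w⟫ from hsym _ _]
    have hmvu : mv (u i) = hL.eigenvalues i • (u i : EuclideanSpace ℝ (Fin n)) := by
      have := hL.mulVec_eigenvectorBasis i
      exact PiLp.ext (congrFun this)
    rw [hmvu, real_inner_smul_left, real_inner_comm w (u i)]; ring
  have hform : ∑ i, ∑ j, L i j * (v i * v j) = ⟪v, mv v⟫ := by
    simp only [PiLp.inner_apply, RCLike.inner_apply', conj_trivial, hmv, Matrix.mulVec,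
      dotProduct, WithLp.ofLp_toLp]
    rw [Finset.sum_comm]
    congr 1; ext i
    rw [Finset.mul_sum]
    congr 1; ext j
    have := hL.apply i j
    simp only [RCLike.star_def, conj_trivial] at this
    rw [← this]; ring
  rw [hform, key]
  have parseval : ∑ i, ⟪u i, v⟫ * ⟪u i, v⟫ = ‖v‖ ^ 2 := by
    have h := OrthonormalBasis.sum_inner_mul_inner u v v
    rw [real_inner_self_eq_norm_sq] at h
    rw [← h]
    congr 1; ext i; rw [real_inner_comm v (u i)]
  rw [← parseval, Finset.mul_sum]
  apply Finset.sum_le_sum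
  intro i _
  rcases hrho2min i with h0 | hge
  · have hLu : L.mulVec (u i) = 0 := by
      have := hL.mulVec_eigenvectorBasis i
      rw [h0, zero_smul] at this; exact this
    obtain ⟨c, hc⟩ := (hker _).mp hLu
    have hz : ⟪u i, v⟫ = 0 := by
      simp only [PiLp.inner_apply, RCLike.inner_apply', conj_trivial]
      have hcj : ∀ j, (u i : EuclideanSpace ℝ (Fin n)) j = c := fun j => congrFun hc j
      calc ∑ j, (u i : EuclideanSpace ℝ (Fin n)) j * v j = ∑ j, c * v j := by
            apply Finset.sum_congr rfl; intro j _; rw [hcj j]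
        _ = c * ∑ j, v j := by rw [Finset.mul_sum]
        _ = 0 := by rw [hv, mul_zero]
    rw [hz, h0]; simp
  · exact mul_le_mul_of_nonneg_right hge (mul_self_nonneg _)

lemma grad_sum' {p n : ℕ} (g : Fin n → (EuclideanSpace ℝ (Fin p) → ℝ))
    (hdiff : ∀ i, Differentiable ℝ (g i)) (x : EuclideanSpace ℝ (Fin p)) :
    gradient (fun y => ∑ i, g i y) x = ∑ i, gradient (g i) x := by
  unfold gradient
  rw [fderiv_fun_sum (fun i _ => (hdiff i).differentiableAt)]
  exact map_sum (InnerProductSpace.toDual ℝ (EuclideanSpace ℝ (Fin p))).symm.toLinearEquiv _ _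

set_option maxHeartbeats 1000000 in
/-- Lemma 2 of the paper: if each `fᵢ` has `L_f`-Lipschitz gradient, the global cost
`f = Σᵢ fᵢ` satisfies the restricted secant inequality with constant `ν > 0` w.r.t. its
nonempty closed convex minimizer set `Xs`, `L` is a connected graph Laplacian with smallest
positive eigenvalue `ρ₂`, and `α > (2n L_f² + ν L_f)/(ν ρ₂)`, then
`(∇𝒇̃(𝒙) − ∇𝒇̃(P 𝒙))ᵀ(𝒙 − P 𝒙) + α 𝒙ᵀ𝑳𝒙 ≥ ν₁ ‖𝒙 − P 𝒙‖²` with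
`ν₁ = min{ν/(2n), α ρ₂ − (2n L_f² + ν L_f)/ν}`. -/
theorem stmt8 {n p : ℕ} (hn : 0 < n)
    (f : Fin n → (EuclideanSpace ℝ (Fin p) → ℝ))
    (hdiff : ∀ i, Differentiable ℝ (f i))
    (Lf : ℝ) (hLf : 0 < Lf)
    (hlip : ∀ i, ∀ a b : EuclideanSpace ℝ (Fin p),
      ‖gradient (f i) a - gradient (f i) b‖ ≤ Lf * ‖a - b‖)
    (Xs : Set (EuclideanSpace ℝ (Fin p)))
    (hXs : Xs = {x | ∀ y, (∑ i, f i x) ≤ ∑ i, f i y})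
    (hne : Xs.Nonempty) (hclosed : IsClosed Xs) (hconv : Convex ℝ Xs)
    (Pp : EuclideanSpace ℝ (Fin p) → EuclideanSpace ℝ (Fin p))
    (hPpmem : ∀ x, Pp x ∈ Xs)
    (hPpmin : ∀ x, ∀ y ∈ Xs, ‖x - Pp x‖ ≤ ‖x - y‖)
    (ν : ℝ) (hν : 0 < ν)
    (hRSI : ∀ x : EuclideanSpace ℝ (Fin p), ν * ‖x - Pp x‖ ^ 2 ≤
      ⟪gradient (fun y => ∑ i, f i y) x - gradient (fun y => ∑ i, f i y) (Pp x), x - Pp x⟫)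
    (L : Matrix (Fin n) (Fin n) ℝ)
    (hL : L.IsHermitian) (hpsd : L.PosSemidef)
    (hker : ∀ v : Fin n → ℝ, L.mulVec v = 0 ↔ ∃ c : ℝ, v = (fun _ => c))
    (rho2 : ℝ) (hrho2pos : 0 < rho2)
    (hrho2mem : ∃ i, hL.eigenvalues i = rho2)
    (hrho2min : ∀ i, hL.eigenvalues i = 0 ∨ rho2 ≤ hL.eigenvalues i)
    (P : PiLp 2 (fun _ : Fin n => EuclideanSpace ℝ (Fin p)) →
      PiLp 2 (fun _ : Fin n => EuclideanSpace ℝ (Fin p)))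
    (hPmem : ∀ z, P z ∈ {z : PiLp 2 (fun _ : Fin n => EuclideanSpace ℝ (Fin p)) |
      ∃ xs ∈ Xs, z = WithLp.toLp 2 (fun _ => xs)})
    (hPmin : ∀ z, ∀ c ∈ {z : PiLp 2 (fun _ : Fin n => EuclideanSpace ℝ (Fin p)) |
      ∃ xs ∈ Xs, z = WithLp.toLp 2 (fun _ => xs)}, ‖z - P z‖ ≤ ‖z - c‖)
    (α : ℝ) (hα : (2 * n * Lf ^ 2 + ν * Lf) / (ν * rho2) < α) :
    ∀ x : PiLp 2 (fun _ : Fin n => EuclideanSpace ℝ (Fin p)),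
      min (ν / (2 * n)) (α * rho2 - (2 * n * Lf ^ 2 + ν * Lf) / ν) * ‖x - P x‖ ^ 2 ≤
        (∑ i, ⟪gradient (f i) (x i) - gradient (f i) (P x i), x i - P x i⟫)
          + α * ∑ i, ∑ j, L i j * ⟪x i, x j⟫ := by
  intro x
  classical
  have hnR : (0:ℝ) < n := by exact_mod_cast hn
  obtain ⟨xs, hxsXs, hPx⟩ := hPmem x
  set xbar : EuclideanSpace ℝ (Fin p) := (n:ℝ)⁻¹ • ∑ i, x i with hxbar
  -- sum of deviations is zero
  have hsumdev : ∑ i, (x i - xbar) = 0 := by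
    rw [Finset.sum_sub_distrib, Finset.sum_const, Finset.card_univ, Fintype.card_fin,
      hxbar, ← Nat.cast_smul_eq_nsmul ℝ, smul_smul]
    rw [mul_inv_cancel₀ (ne_of_gt hnR), one_smul, sub_self]
  -- norm identity
  have hnormid : ∀ (y : EuclideanSpace ℝ (Fin p))
      (z : PiLp 2 (fun _ : Fin n => EuclideanSpace ℝ (Fin p))), (∀ i, z i = y) →
      ‖x - z‖ ^ 2 = (∑ i, ‖x i - xbar‖ ^ 2) + n * ‖xbar - y‖ ^ 2 := by
    intro y z hz
    rw [PiLp.norm_sq_eq_of_L2]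
    have hterm : ∀ i : Fin n,
        ‖(x - z) i‖ ^ 2
          = ‖x i - xbar‖ ^ 2 + 2 * ⟪x i - xbar, xbar - y⟫ + ‖xbar - y‖ ^ 2 := by
      intro i
      have h1 : (x - z) i = (x i - xbar) + (xbar - y) := by
        rw [PiLp.sub_apply, hz i]; abel
      rw [h1, norm_add_sq_real]
    rw [Finset.sum_congr rfl (fun i _ => hterm i), Finset.sum_add_distrib,
      Finset.sum_add_distrib]
    have h2 : ∑ i : Fin n, 2 * ⟪x i - xbar, xbar - y⟫ = 0 := by
      rw [← Finset.mul_sum, ← sum_inner, hsumdev, inner_zero_left]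
      simp
    rw [h2, Finset.sum_const, Finset.card_univ, Fintype.card_fin, nsmul_eq_mul]
    ring
  -- xs is a minimizer of distance from xbar to Xs
  have hprojmin : ∀ y ∈ Xs, ‖xbar - xs‖ ≤ ‖xbar - y‖ := by
    intro y hy
    have h := hPmin x (WithLp.toLp 2 (fun _ => y)) ⟨y, hy, rfl⟩
    have h2 := pow_le_pow_left₀ (norm_nonneg _) h 2
    rw [hnormid xs (P x) (fun i => by rw [hPx]), hnormid y _ (fun i => rfl)] at h2
    have h3 : ‖xbar - xs‖ ^ 2 ≤ ‖xbar - y‖ ^ 2 :=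
      le_of_mul_le_mul_left (by linarith) hnR
    nlinarith [norm_nonneg (xbar - xs), norm_nonneg (xbar - y)]
  -- uniqueness of projection: xs = Pp xbar
  set q : EuclideanSpace ℝ (Fin p) := Pp xbar with hq
  have hxs_eq : xs = q := by
    have h1 : ‖xbar - q‖ ≤ ‖xbar - xs‖ := hPpmin xbar xs hxsXs
    have h2 : ‖xbar - xs‖ ≤ ‖xbar - q‖ := hprojmin q (hPpmem xbar)
    set m := (1/2 : ℝ) • xs + (1/2 : ℝ) • q with hm
    have hmXs : m ∈ Xs := hconv hxsXs (hPpmem xbar) (by norm_num) (by norm_num) (by norm_num)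
    have h3 : ‖xbar - xs‖ ≤ ‖xbar - m‖ := hprojmin m hmXs
    have hpar := parallelogram_law_with_norm ℝ (xbar - xs) (xbar - q)
    have huv : (xbar - xs) + (xbar - q) = (2:ℝ) • (xbar - m) := by
      rw [hm]; module
    have hnuv : ‖(xbar - xs) + (xbar - q)‖ = 2 * ‖xbar - m‖ := by
      rw [huv, norm_smul]; simp
    have h4 : ‖(xbar - xs) - (xbar - q)‖ ≤ 0 := by
      nlinarith [norm_nonneg ((xbar - xs) - (xbar - q)), norm_nonneg (xbar - m),
        norm_nonneg (xbar - xs)]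
    have h5 : (xbar - xs) - (xbar - q) = 0 := norm_le_zero_iff.mp h4
    have h6 : xbar - xs = xbar - q := by rwa [sub_eq_zero] at h5
    rwa [sub_right_inj] at h6
  -- abbreviations
  set c : ℝ := ‖xbar - q‖ with hc
  set A : ℝ := ∑ i, ‖x i - xbar‖ ^ 2 with hA
  set D : ℝ := ∑ i, ‖x i - xbar‖ with hD
  have hA0 : 0 ≤ A := Finset.sum_nonneg fun i _ => sq_nonneg _
  have hc0 : 0 ≤ c := norm_nonneg _
  -- RSI at xbar, in summed form
  have hRSIsum : ν * c ^ 2 ≤ ∑ i, ⟪gradient (f i) xbar - gradient (f i) q, xbar - q⟫ := by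
    have h := hRSI xbar
    rw [grad_sum' f hdiff, grad_sum' f hdiff] at h
    rw [← Finset.sum_sub_distrib, sum_inner] at h
    exact h
  -- per-agent lower bound
  have hper : ∀ i ∈ (Finset.univ : Finset (Fin n)),
      ⟪gradient (f i) xbar - gradient (f i) q, xbar - q⟫
        - Lf * ‖x i - xbar‖ ^ 2 - 2 * Lf * (c * ‖x i - xbar‖)
      ≤ ⟪gradient (f i) (x i) - gradient (f i) q, x i - q⟫ := by
    intro i _
    have hdecomp : ⟪gradient (f i) (x i) - gradient (f i) q, x i - q⟫
        = ⟪gradient (f i) (x i) - gradient (f i) xbar, x i - q⟫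
          + ⟪gradient (f i) xbar - gradient (f i) q, x i - xbar⟫
          + ⟪gradient (f i) xbar - gradient (f i) q, xbar - q⟫ := by
      simp only [inner_sub_left, inner_sub_right]; ring
    have htri : ‖x i - q‖ ≤ ‖x i - xbar‖ + ‖xbar - q‖ := by
      have h := norm_add_le (x i - xbar) (xbar - q)
      rwa [sub_add_sub_cancel] at h
    have hlip1 := hlip i (x i) xbar
    have hlip2 := hlip i xbar q
    have habs1 := abs_real_inner_le_norm
      (gradient (f i) (x i) - gradient (f i) xbar) (x i - q)
    have habs2 := abs_real_inner_le_norm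
      (gradient (f i) xbar - gradient (f i) q) (x i - xbar)
    have hb1 : ‖gradient (f i) (x i) - gradient (f i) xbar‖ * ‖x i - q‖
        ≤ (Lf * ‖x i - xbar‖) * (‖x i - xbar‖ + ‖xbar - q‖) :=
      mul_le_mul hlip1 htri (norm_nonneg _) (by positivity)
    have hb2 : ‖gradient (f i) xbar - gradient (f i) q‖ * ‖x i - xbar‖
        ≤ (Lf * ‖xbar - q‖) * ‖x i - xbar‖ :=
      mul_le_mul_of_nonneg_right hlip2 (norm_nonneg _)
    rw [hdecomp]
    have hn1 := neg_abs_le ⟪gradient (f i) (x i) - gradient (f i) xbar, x i - q⟫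
    have hn2 := neg_abs_le ⟪gradient (f i) xbar - gradient (f i) q, x i - xbar⟫
    linarith [hn1, hn2, habs1, habs2, hb1, hb2]
  -- summed lower bound
  have hS1 : ν * c ^ 2 - Lf * A - 2 * Lf * (c * D)
      ≤ ∑ i, ⟪gradient (f i) (x i) - gradient (f i) q, x i - q⟫ := by
    have hsum := Finset.sum_le_sum hper
    have heq : ∑ i, (⟪gradient (f i) xbar - gradient (f i) q, xbar - q⟫
        - Lf * ‖x i - xbar‖ ^ 2 - 2 * Lf * (c * ‖x i - xbar‖))
        = (∑ i, ⟪gradient (f i) xbar - gradient (f i) q, xbar - q⟫)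
          - Lf * A - 2 * Lf * (c * D) := by
      rw [Finset.sum_sub_distrib, Finset.sum_sub_distrib, hA, hD, Finset.mul_sum,
        Finset.mul_sum, Finset.mul_sum]
    rw [heq] at hsum
    linarith [hRSIsum]
  -- Laplacian quadratic lower bound
  have hrow : ∀ i, ∑ j, L i j = 0 := by
    intro i
    have h1 : L.mulVec (fun _ => (1:ℝ)) = 0 := (hker _).mpr ⟨1, rfl⟩
    have h2 := congrFun h1 i
    simpa [Matrix.mulVec, dotProduct] using h2
  have hcol : ∀ j, ∑ i, L i j = 0 := by
    intro j
    have : ∀ i, L i j = L j i := by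
      intro i
      have := hL.apply i j
      simp only [RCLike.star_def, conj_trivial] at this
      rw [← this]
    rw [Finset.sum_congr rfl (fun i _ => this i)]
    exact hrow j
  have hquad : rho2 * A ≤ ∑ i, ∑ j, L i j * ⟪x i - xbar, x j - xbar⟫ := by
    have hcoord : ∀ k : Fin p, ∑ i, (x i - xbar) k = 0 := by
      intro k
      have h := map_sum (EuclideanSpace.proj (𝕜 := ℝ) k) (fun i => x i - xbar) Finset.univ
      rw [hsumdev, map_zero] at h
      exact h.symm
    have hinner : ∀ i j : Fin n, ⟪x i - xbar, x j - xbar⟫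
        = ∑ k : Fin p, (x i - xbar) k * (x j - xbar) k := by
      intro i j
      simp [PiLp.inner_apply, RCLike.inner_apply']
      exact Finset.sum_congr rfl fun _ _ => mul_comm _ _
    have hswap : ∑ i, ∑ j, L i j * ⟪x i - xbar, x j - xbar⟫
        = ∑ k : Fin p, ∑ i, ∑ j, L i j * ((x i - xbar) k * (x j - xbar) k) := by
      calc ∑ i, ∑ j, L i j * ⟪x i - xbar, x j - xbar⟫
          = ∑ i, ∑ j, ∑ k : Fin p, L i j * ((x i - xbar) k * (x j - xbar) k) := by
            apply Finset.sum_congr rfl; intro i _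
            apply Finset.sum_congr rfl; intro j _
            rw [hinner i j, Finset.mul_sum]
        _ = ∑ i, ∑ k : Fin p, ∑ j, L i j * ((x i - xbar) k * (x j - xbar) k) := by
            apply Finset.sum_congr rfl; intro i _
            exact Finset.sum_comm
        _ = ∑ k : Fin p, ∑ i, ∑ j, L i j * ((x i - xbar) k * (x j - xbar) k) :=
            Finset.sum_comm
    have hAcoord : A = ∑ k : Fin p, ∑ i, ((x i - xbar) k) ^ 2 := by
      rw [hA, Finset.sum_comm]
      apply Finset.sum_congr rfl; intro i _
      rw [PiLp.norm_sq_eq_of_L2]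
      exact Finset.sum_congr rfl fun k _ => by rw [Real.norm_eq_abs, sq_abs]
    rw [hswap, hAcoord, Finset.mul_sum]
    apply Finset.sum_le_sum
    intro k _
    exact lap_quad' L hL hker rho2 hrho2min (WithLp.toLp 2 (fun i => (x i - xbar) k)) (hcoord k)
  have hcenter : ∑ i, ∑ j, L i j * ⟪x i - xbar, x j - xbar⟫
      = ∑ i, ∑ j, L i j * ⟪x i, x j⟫ := by
    have expand : ∀ i j : Fin n, L i j * ⟪x i - xbar, x j - xbar⟫
        = L i j * ⟪x i, x j⟫ - L i j * ⟪x i, xbar⟫ - L i j * ⟪xbar, x j⟫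
          + L i j * ⟪xbar, xbar⟫ := by
      intro i j; simp only [inner_sub_left, inner_sub_right]; ring
    have per : ∀ i, ∑ j, L i j * ⟪x i - xbar, x j - xbar⟫
        = ∑ j, L i j * ⟪x i, x j⟫ - ∑ j, L i j * ⟪xbar, x j⟫ := by
      intro i
      rw [Finset.sum_congr rfl (fun j _ => expand i j), Finset.sum_add_distrib,
        Finset.sum_sub_distrib, Finset.sum_sub_distrib, ← Finset.sum_mul, ← Finset.sum_mul,
        hrow i, zero_mul, zero_mul]
      ring
    rw [Finset.sum_congr rfl (fun i _ => per i), Finset.sum_sub_distrib]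
    have e2 : ∑ i, ∑ j, L i j * ⟪xbar, x j⟫ = 0 := by
      rw [Finset.sum_comm]
      apply Finset.sum_eq_zero; intro j _
      rw [← Finset.sum_mul, hcol j, zero_mul]
    rw [e2, sub_zero]
  have hQ : rho2 * A ≤ ∑ i, ∑ j, L i j * ⟪x i, x j⟫ := hcenter ▸ hquad
  -- positivity of α
  have hα0 : 0 ≤ α := by
    have hTpos : 0 < 2 * n * Lf ^ 2 + ν * Lf := by positivity
    have := div_pos hTpos (mul_pos hν hrho2pos)
    linarith
  have hαQ : α * (rho2 * A) ≤ α * ∑ i, ∑ j, L i j * ⟪x i, x j⟫ :=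
    mul_le_mul_of_nonneg_left hQ hα0
  -- Young's inequality, summed
  have hyoung : 2 * Lf * (c * D) ≤ ν / 2 * c ^ 2 + 2 * n * Lf ^ 2 / ν * A := by
    have hkey : ∀ i ∈ (Finset.univ : Finset (Fin n)),
        2 * Lf * (c * ‖x i - xbar‖)
          ≤ ν / (2 * n) * c ^ 2 + 2 * n * Lf ^ 2 / ν * ‖x i - xbar‖ ^ 2 := by
      intro i _
      have hnν : (0:ℝ) < 2 * n * ν := by positivity
      rw [← mul_le_mul_iff_of_pos_right hnν]
      have hrhs : (ν / (2 * n) * c ^ 2 + 2 * (n:ℝ) * Lf ^ 2 / ν * ‖x i - xbar‖ ^ 2)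
          * (2 * n * ν)
          = ν ^ 2 * c ^ 2 + 4 * (n:ℝ) ^ 2 * Lf ^ 2 * ‖x i - xbar‖ ^ 2 := by
        field_simp; ring
      rw [hrhs]
      nlinarith [sq_nonneg (2 * (n:ℝ) * Lf * ‖x i - xbar‖ - ν * c)]
    have hsum := Finset.sum_le_sum hkey
    have hl : ∑ i : Fin n, 2 * Lf * (c * ‖x i - xbar‖) = 2 * Lf * (c * D) := by
      rw [hD, Finset.mul_sum, Finset.mul_sum]
    have hr : ∑ i : Fin n, (ν / (2 * n) * c ^ 2 + 2 * (n:ℝ) * Lf ^ 2 / ν * ‖x i - xbar‖ ^ 2)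
        = ν / 2 * c ^ 2 + 2 * n * Lf ^ 2 / ν * A := by
      rw [Finset.sum_add_distrib, Finset.sum_const, Finset.card_univ, Fintype.card_fin,
        nsmul_eq_mul, hA, ← Finset.mul_sum]
      have : (n:ℝ) * (ν / (2 * n) * c ^ 2) = ν / 2 * c ^ 2 := by
        field_simp
      rw [this]
    rw [hl, hr] at hsum
    exact hsum
  -- split the min
  set M := min (ν / (2 * (n:ℝ))) (α * rho2 - (2 * n * Lf ^ 2 + ν * Lf) / ν) with hM
  have hm1 : M ≤ ν / (2 * n) := min_le_left _ _
  have hm2 : M ≤ α * rho2 - (2 * n * Lf ^ 2 + ν * Lf) / ν := min_le_right _ _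
  have hdiv : (2 * (n:ℝ) * Lf ^ 2 + ν * Lf) / ν = 2 * n * Lf ^ 2 / ν + Lf := by
    field_simp
  have hsplit : M * (A + n * c ^ 2)
      ≤ (α * rho2 - (2 * n * Lf ^ 2 + ν * Lf) / ν) * A + ν / 2 * c ^ 2 := by
    have h1 : M * A ≤ (α * rho2 - (2 * n * Lf ^ 2 + ν * Lf) / ν) * A :=
      mul_le_mul_of_nonneg_right hm2 hA0
    have h2 : M * ((n:ℝ) * c ^ 2) ≤ ν / (2 * n) * ((n:ℝ) * c ^ 2) :=
      mul_le_mul_of_nonneg_right hm1 (by positivity)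
    have h3 : ν / (2 * (n:ℝ)) * ((n:ℝ) * c ^ 2) = ν / 2 * c ^ 2 := by
      field_simp
    nlinarith [h1, h2, h3]
  -- rewrite the goal
  have hPxi : ∀ i, P x i = q := by
    intro i; rw [hPx]; exact hxs_eq
  have hnormPx : ‖x - P x‖ ^ 2 = A + n * c ^ 2 := by
    exact hnormid q (P x) hPxi
  simp only [hPxi, hnormPx]
  calc M * (A + ↑n * c ^ 2)
      ≤ (α * rho2 - (2 * n * Lf ^ 2 + ν * Lf) / ν) * A + ν / 2 * c ^ 2 := hsplit
    _ ≤ (∑ i, ⟪gradient (f i) (x i) - gradient (f i) q, x i - q⟫)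
          + α * ∑ i, ∑ j, L i j * ⟪x i, x j⟫ := by
        rw [hdiv] at *
        nlinarith [hS1, hαQ, hyoung]
end

section
/- Under the hypotheses of the augmented restricted secant inequality lemma, the inner decomposition estimate: if 𝒙 = 𝒂 + 𝒃 with 𝒂 = 𝟏ₙ ⊗ a the consensus component and 𝒃 orthogonal to the consensus subspace, 𝒙* = P_{𝑿*}(𝒙) = 𝟏ₙ ⊗ x*, and each ∇fᵢ is L_f-Lipschitz while f satisfies RSI with constant ν, then (∇𝒇̃(𝒙) − ∇𝒇̃(𝒙*))ᵀ(𝒙 − 𝒙*) ≥ (ν/(2n))‖𝒂 − 𝒙*‖² − (2nL_f²/ν + L_f)‖𝒃‖². -/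
open scoped RealInnerProductSpace

set_option maxHeartbeats 1000000

/-- Inner decomposition estimate from the proof of Lemma 2: with `𝒂 = 𝟏ₙ ⊗ a` the consensus
component of `𝒙` (`a` the average of the `xᵢ`), `𝒃 = 𝒙 − 𝒂`, `𝒙* = 𝟏ₙ ⊗ x*`, each `∇fᵢ`
`L_f`-Lipschitz, and the restricted secant inequality for `f = Σfᵢ` at `a` with projection
value `x*`, one has
`(∇𝒇̃(𝒙) − ∇𝒇̃(𝒙*))ᵀ(𝒙 − 𝒙*) ≥ (ν/(2n))‖𝒂 − 𝒙*‖² − (2nL_f²/ν + L_f)‖𝒃‖²`. -/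
theorem stmt9 {n p : ℕ} (hn : 0 < n)
    (f : Fin n → (EuclideanSpace ℝ (Fin p) → ℝ))
    (hdiff : ∀ i, Differentiable ℝ (f i))
    (Lf ν : ℝ) (hLf : 0 < Lf) (hν : 0 < ν)
    (hlip : ∀ i, ∀ u v : EuclideanSpace ℝ (Fin p),
      ‖gradient (f i) u - gradient (f i) v‖ ≤ Lf * ‖u - v‖)
    (x : PiLp 2 (fun _ : Fin n => EuclideanSpace ℝ (Fin p)))
    (a xstar : EuclideanSpace ℝ (Fin p))
    (ha : a = (n : ℝ)⁻¹ • ∑ i, x i)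
    (A Xstar b : PiLp 2 (fun _ : Fin n => EuclideanSpace ℝ (Fin p)))
    (hA : A = WithLp.toLp 2 (fun _ => a)) (hXstar : Xstar = WithLp.toLp 2 (fun _ => xstar))
    (hb : b = x - A)
    (hRSIa : ν * ‖a - xstar‖ ^ 2 ≤
      ∑ i, ⟪gradient (f i) a - gradient (f i) xstar, a - xstar⟫) :
    (ν / (2 * n)) * ‖A - Xstar‖ ^ 2 - (2 * n * Lf ^ 2 / ν + Lf) * ‖b‖ ^ 2 ≤
      ∑ i, ⟪gradient (f i) (x i) - gradient (f i) xstar, x i - xstar⟫ := by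
  have hn' : (0:ℝ) < n := by exact_mod_cast hn
  set g : Fin n → EuclideanSpace ℝ (Fin p) → EuclideanSpace ℝ (Fin p) :=
    fun i => gradient (f i) with hg
  set u : EuclideanSpace ℝ (Fin p) := a - xstar with hu
  set c : ℝ := 2 * n * Lf ^ 2 / ν with hc
  set e : ℝ := ν / (2 * n) with he
  have he0 : 0 < e := by positivity
  have hc0 : 0 ≤ c := by positivity
  have hec : e * c = Lf ^ 2 := by
    rw [he, hc]; field_simp
  -- norms
  have hbi : ∀ i, b i = x i - a := by
    intro i; rw [hb, hA]; rfl
  have hbsq : ‖b‖ ^ 2 = ∑ i, ‖x i - a‖ ^ 2 := by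
    rw [PiLp.norm_sq_eq_of_L2]
    exact Finset.sum_congr rfl fun i _ => by rw [hbi i]
  have hAX : ‖A - Xstar‖ ^ 2 = n * ‖u‖ ^ 2 := by
    rw [PiLp.norm_sq_eq_of_L2]
    have : ∀ i : Fin n, ‖(A - Xstar) i‖ ^ 2 = ‖u‖ ^ 2 := by
      intro i; rw [hA, hXstar]; rfl
    rw [Finset.sum_congr rfl fun i _ => this i, Finset.sum_const, Finset.card_univ,
      Fintype.card_fin, nsmul_eq_mul]
  -- per index inequality
  have key : ∀ i : Fin n,
      ⟪g i a - g i xstar, u⟫ - (Lf + c) * ‖x i - a‖ ^ 2 - e * ‖u‖ ^ 2 ≤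
        ⟪g i (x i) - g i xstar, x i - xstar⟫ := by
    intro i
    have hdecomp : ⟪g i (x i) - g i xstar, x i - xstar⟫ =
        ⟪g i (x i) - g i a, x i - a⟫ + ⟪g i (x i) - g i a, u⟫ +
        ⟪g i a - g i xstar, x i - a⟫ + ⟪g i a - g i xstar, u⟫ := by
      have hx : x i - xstar = (x i - a) + u := by rw [hu]; abel
      rw [hx]
      simp only [inner_sub_left, inner_add_right]
      ring
    have h1 : -(Lf * (‖x i - a‖ * ‖x i - a‖)) ≤ ⟪g i (x i) - g i a, x i - a⟫ := by
      have habs := abs_real_inner_le_norm (g i (x i) - g i a) (x i - a)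
      have hl := hlip i (x i) a
      nlinarith [neg_abs_le (⟪g i (x i) - g i a, x i - a⟫ : ℝ), norm_nonneg (x i - a)]
    have h2 : -(Lf * (‖x i - a‖ * ‖u‖)) ≤ ⟪g i (x i) - g i a, u⟫ := by
      have habs := abs_real_inner_le_norm (g i (x i) - g i a) u
      have hl := hlip i (x i) a
      nlinarith [neg_abs_le (⟪g i (x i) - g i a, u⟫ : ℝ), norm_nonneg u]
    have h3 : -(Lf * (‖u‖ * ‖x i - a‖)) ≤ ⟪g i a - g i xstar, x i - a⟫ := by
      have habs := abs_real_inner_le_norm (g i a - g i xstar) (x i - a)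
      have hl := hlip i a xstar
      have hux : a - xstar = u := rfl
      rw [hux] at hl
      nlinarith [neg_abs_le (⟪g i a - g i xstar, x i - a⟫ : ℝ), norm_nonneg (x i - a)]
    have hY : 2 * (Lf * (‖u‖ * ‖x i - a‖)) ≤ e * ‖u‖ ^ 2 + c * ‖x i - a‖ ^ 2 := by
      nlinarith [sq_nonneg (e * ‖u‖ - Lf * ‖x i - a‖), he0, norm_nonneg u,
        norm_nonneg (x i - a)]
    rw [hdecomp]
    nlinarith [h1, h2, h3, hY]
  have hsum := Finset.sum_le_sum (fun i (_ : i ∈ Finset.univ) => key i)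
  have hsumeq : ∑ i, (⟪g i a - g i xstar, u⟫ - (Lf + c) * ‖x i - a‖ ^ 2 - e * ‖u‖ ^ 2)
      = (∑ i, ⟪g i a - g i xstar, u⟫) - (Lf + c) * ‖b‖ ^ 2 - n * (e * ‖u‖ ^ 2) := by
    rw [Finset.sum_sub_distrib, Finset.sum_sub_distrib, ← Finset.mul_sum, ← hbsq,
      Finset.sum_const, Finset.card_univ, Fintype.card_fin, nsmul_eq_mul]
  rw [hsumeq] at hsum
  have hRSI : ν * ‖u‖ ^ 2 ≤ ∑ i, ⟪g i a - g i xstar, u⟫ := hRSIa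
  have hne : e * (n * ‖u‖ ^ 2) = ν / 2 * ‖u‖ ^ 2 := by
    rw [he]; field_simp
  have hgoal : (ν / (2 * n)) * ‖A - Xstar‖ ^ 2 - (2 * n * Lf ^ 2 / ν + Lf) * ‖b‖ ^ 2
      = ν * ‖u‖ ^ 2 - (Lf + c) * ‖b‖ ^ 2 - n * (e * ‖u‖ ^ 2) := by
    rw [hAX, ← he, ← hc]
    have : e * (n * ‖u‖ ^ 2) = ν / 2 * ‖u‖ ^ 2 := hne
    nlinarith [this]
  rw [hgoal]
  linarith [hsum, hRSI]
end

section
/- Along the trajectories of the continuous-time distributed primal-dual dynamics ẋ = −α𝑳𝒙 − β(𝒗 − 𝒗⁰) − (∇𝒇̃(𝒙) − ∇𝒇̃(𝒙⁰)), 𝒗̇ = β𝑳𝒙, where 𝒙⁰ = P_{𝑿*}(𝒙) ∈ ℍ and β𝒗⁰ = −∇𝒇̃(𝒙⁰), the function V₁(𝒙,𝒗) = ½‖𝒙 − 𝒙⁰‖² + ½‖𝒗 − 𝒗⁰‖²_{RΛ₁⁻¹Rᵀ ⊗ I_p} satisfies V̇₁ ≤ −ν₁‖𝒙 − 𝒙⁰‖²,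 provided the augmented RSI inequality (∇𝒇̃(𝒙) − ∇𝒇̃(𝒙⁰))ᵀ(𝒙 − 𝒙⁰) + α𝒙ᵀ𝑳𝒙 ≥ ν₁‖𝒙 − 𝒙⁰‖² holds and (Kₙ ⊗ I_p)(𝒗 − 𝒗⁰) = 𝒗 − 𝒗⁰. -/
open scoped RealInnerProductSpace

/-- `A ⊗ I_p` acting blockwise on `ℝ^{np}`. -/
noncomputable def blockOp11 {n p : ℕ} (A : Matrix (Fin n) (Fin n) ℝ)
    (z : PiLp 2 (fun _ : Fin n => EuclideanSpace ℝ (Fin p))) :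
    PiLp 2 (fun _ : Fin n => EuclideanSpace ℝ (Fin p)) :=
  WithLp.toLp 2 (fun i => ∑ j, A i j • z j)

open scoped Matrix in
lemma blockOp11_adj {n p : ℕ} (A : Matrix (Fin n) (Fin n) ℝ)
    (z w : PiLp 2 (fun _ : Fin n => EuclideanSpace ℝ (Fin p))) :
    ⟪blockOp11 A z, w⟫ = ⟪z, blockOp11 Aᵀ w⟫ := by
  simp only [blockOp11, PiLp.inner_apply, WithLp.ofLp_toLp]
  calc (∑ i, ⟪(∑ j, A i j • z j : EuclideanSpace ℝ (Fin p)), w i⟫)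
      = ∑ i, ∑ j, A i j * ⟪z j, w i⟫ := by
        simp [sum_inner, real_inner_smul_left, Finset.mul_sum, mul_assoc]
    _ = ∑ j, ∑ i, A i j * ⟪z j, w i⟫ := Finset.sum_comm
    _ = ∑ j, ⟪z j, (∑ i, Aᵀ j i • w i : EuclideanSpace ℝ (Fin p))⟫ := by
        simp [inner_sum, real_inner_smul_right, Matrix.transpose_apply, Finset.mul_sum,
          mul_comm, mul_assoc, mul_left_comm]

open scoped Matrix in
lemma blockOp11_mul {n p : ℕ} (A B : Matrix (Fin n) (Fin n) ℝ)
    (z : PiLp 2 (fun _ : Fin n => EuclideanSpace ℝ (Fin p))) :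
    blockOp11 (A * B) z = blockOp11 A (blockOp11 B z) := by
  refine PiLp.ext fun i => ?_
  show ∑ j, (A * B) i j • z j = ∑ k, A i k • ∑ j, B k j • z j
  simp only [Matrix.mul_apply, Finset.sum_smul, Finset.smul_sum, smul_smul]
  exact Finset.sum_comm

lemma blockOp11_smul {n p : ℕ} (A : Matrix (Fin n) (Fin n) ℝ) (c : ℝ)
    (z : PiLp 2 (fun _ : Fin n => EuclideanSpace ℝ (Fin p))) :
    blockOp11 A (c • z) = c • blockOp11 A z := by
  refine PiLp.ext fun i => ?_
  show ∑ j, A i j • (c • z j) = c • ∑ j, A i j • z j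
  rw [Finset.smul_sum]
  exact Finset.sum_congr rfl fun j _ => (smul_comm _ _ _).symm

open scoped Matrix

/-- Dissipation inequality for `V₁(𝒙,𝒗) = ½‖𝒙 − 𝒙⁰‖² + ½‖𝒗 − 𝒗⁰‖²_{RΛ₁⁻¹Rᵀ⊗I}` along the
primal-dual dynamics `ẋ = −α𝑳𝒙 − β(𝒗 − 𝒗⁰) − (∇𝒇̃(𝒙) − ∇𝒇̃(𝒙⁰))`, `𝒗̇ = β𝑳𝒙`:
`V̇₁ ≤ −ν₁‖𝒙 − 𝒙⁰‖²` provided the augmented RSI holds and `(Kₙ⊗I)(𝒗 − 𝒗⁰) = 𝒗 − 𝒗⁰`. -/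
theorem stmt11 {n p : ℕ} (hn : 0 < n)
    (f : Fin n → (EuclideanSpace ℝ (Fin p) → ℝ)) (hdiff : ∀ i, Differentiable ℝ (f i))
    (α β ν₁ : ℝ) (hα : 0 < α) (hβ : 0 < β) (hν₁ : 0 < ν₁)
    (L M K : Matrix (Fin n) (Fin n) ℝ)
    (hLsymm : L.IsSymm) (hMsymm : M.IsSymm)
    (hK : K = 1 - (n : ℝ)⁻¹ • Matrix.of (fun _ _ => (1 : ℝ)))
    (hML : M * L = K)
    (x v x0 v0 : PiLp 2 (fun _ : Fin n => EuclideanSpace ℝ (Fin p)))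
    (hx0cons : ∃ y : EuclideanSpace ℝ (Fin p), x0 = WithLp.toLp 2 (fun _ => y))
    (hLx0 : blockOp11 L x0 = 0) (hKx0 : blockOp11 K x0 = 0)
    (hKv : blockOp11 K (v - v0) = v - v0)
    (G : PiLp 2 (fun _ : Fin n => EuclideanSpace ℝ (Fin p)) →
      PiLp 2 (fun _ : Fin n => EuclideanSpace ℝ (Fin p)))
    (hG : G = fun z : PiLp 2 (fun _ : Fin n => EuclideanSpace ℝ (Fin p)) =>
      WithLp.toLp 2 (fun i => gradient (f i) (z i)))
    (hRSI : ν₁ * ‖x - x0‖ ^ 2 ≤ ⟪G x - G x0, x - x0⟫ + α * ⟪x, blockOp11 L x⟫) :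
    ⟪x - x0, -(α • blockOp11 L x) - β • (v - v0) - (G x - G x0)⟫
        + ⟪v - v0, blockOp11 M (β • blockOp11 L x)⟫ ≤ -(ν₁ * ‖x - x0‖ ^ 2) := by
  have hKT : Kᵀ = K := by
    subst hK
    ext i j
    simp [Matrix.transpose_apply, Matrix.one_apply, eq_comm]
  have hLT : Lᵀ = L := hLsymm
  -- e1 : ⟪x0, L x⟫ = 0
  have e1 : ⟪x0, blockOp11 L x⟫ = (0 : ℝ) := by
    have h := blockOp11_adj L x0 x
    rw [hLT, hLx0, inner_zero_left] at h
    exact h.symm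
  -- e2 : ⟪x0, v - v0⟫ = 0
  have e2 : ⟪x0, v - v0⟫ = (0 : ℝ) := by
    have h := blockOp11_adj K x0 (v - v0)
    rw [hKT, hKv, hKx0, inner_zero_left] at h
    exact h.symm
  -- e3 : dual cross term
  have e3 : ⟪v - v0, blockOp11 M (β • blockOp11 L x)⟫ = β * ⟪x, v - v0⟫ := by
    rw [blockOp11_smul, real_inner_smul_right]
    congr 1
    have h := blockOp11_adj K x (v - v0)
    rw [hKT, hKv] at h
    calc ⟪v - v0, blockOp11 M (blockOp11 L x)⟫
        = ⟪v - v0, blockOp11 (M * L) x⟫ := by rw [blockOp11_mul]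
      _ = ⟪v - v0, blockOp11 K x⟫ := by rw [hML]
      _ = ⟪blockOp11 K x, v - v0⟫ := real_inner_comm _ _
      _ = ⟪x, v - v0⟫ := h
  have hRSI' : ν₁ * ‖x - x0‖ ^ 2 ≤ ⟪x - x0, G x - G x0⟫ + α * ⟪x, blockOp11 L x⟫ := by
    have : ⟪G x - G x0, x - x0⟫ = ⟪x - x0, G x - G x0⟫ := real_inner_comm _ _
    linarith [hRSI, this]
  have e1' : α * ⟪x0, blockOp11 L x⟫ = (0 : ℝ) := by rw [e1]; ring
  have e2' : β * ⟪x0, v - v0⟫ = (0 : ℝ) := by rw [e2]; ring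
  rw [e3]
  simp only [inner_sub_right, inner_sub_left, inner_neg_right, real_inner_smul_right,
    mul_sub] at hRSI' e1' e2' ⊢
  linarith [hRSI', e1', e2']
end
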